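/- Under the hypotheses of the generalized Ćirić theorem in a cone metric space, if u and v are both fixed points of T, then u = v. More precisely, from d(u,v) = d(Tu,Tv) ≤ A₁(u,v)d(u,v) + 2A₄(u,v)d(u,v) and the bound ‖A₁(u,v)‖ + 2‖A₄(u,v)‖ ≤ α < 1/k with P normal of constant k, it follows that d(u,v) = 0. -/

import Mathlib

open Filter Topology

/-- A cone in a real normed space: closed, nonempty, not `{0}`, closed under
nonnegative linear combinations, and pointed. -/
def IsCone {E : Type*} [NormedAddCommGroup E] [NormedSpace ℝ E] (P : Set E) : Prop :=
  IsClosed P ∧ P.Nonempty ∧ P ≠ {0} ∧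
  (∀ a b : ℝ, 0 ≤ a → 0 ≤ b → ∀ x ∈ P, ∀ y ∈ P, a • x + b • y ∈ P) ∧
  (∀ x ∈ P, -x ∈ P → x = 0)

/-- The partial ordering induced by a cone: `x ≤ y` iff `y - x ∈ P`. -/
def coneLE {E : Type*} [NormedAddCommGroup E] [NormedSpace ℝ E] (P : Set E) (x y : E) : Prop :=
  y - x ∈ P

/-- `P` is a normal cone with normal constant `k`: `0 ≤ x ≤ y` implies `‖x‖ ≤ k‖y‖`. -/
def IsNormalCone {E : Type*} [NormedAddCommGroup E] [NormedSpace ℝ E] (P : Set E) (k : ℝ) : Prop :=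
  ∀ x y : E, x ∈ P → y - x ∈ P → ‖x‖ ≤ k * ‖y‖

/-- `d` is a cone metric on `X` with values in `(E, P)`. -/
structure IsConeMetric {E : Type*} [NormedAddCommGroup E] [NormedSpace ℝ E]
    (P : Set E) {X : Type*} (d : X → X → E) : Prop where
  mem_cone : ∀ x y, d x y ∈ P
  eq_zero_iff : ∀ x y, d x y = 0 ↔ x = y
  symm : ∀ x y, d x y = d y x
  triangle : ∀ x y z, d x z + d z y - d x y ∈ P

/-- Convergence of a sequence in a cone metric space. -/
def ConeConv {E : Type*} [NormedAddCommGroup E] [NormedSpace ℝ E]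
    (P : Set E) {X : Type*} (d : X → X → E) (s : ℕ → X) (x : X) : Prop :=
  ∀ c ∈ interior P, ∃ N, ∀ n > N, c - d (s n) x ∈ interior P

/-- Cauchy sequences in a cone metric space. -/
def ConeCauchy {E : Type*} [NormedAddCommGroup E] [NormedSpace ℝ E]
    (P : Set E) {X : Type*} (d : X → X → E) (s : ℕ → X) : Prop :=
  ∀ c ∈ interior P, ∃ N, ∀ n > N, ∀ m > N, c - d (s n) (s m) ∈ interior P

/-- A cone metric space is complete if every Cauchy sequence converges. -/
def ConeComplete {E : Type*} [NormedAddCommGroup E] [NormedSpace ℝ E]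
    (P : Set E) {X : Type*} (d : X → X → E) : Prop :=
  ∀ s : ℕ → X, ConeCauchy P d s → ∃ x, ConeConv P d s x

theorem fixed_point_unique {E : Type*} [NormedAddCommGroup E] [NormedSpace ℝ E]
    [CompleteSpace E] {X : Type*} (P : Set E) (hP : IsCone P)
    (k : ℝ) (hk : 1 ≤ k) (hnorm : IsNormalCone P k)
    (d : X → X → E) (hd : IsConeMetric P d)
    (T : X → X) (A₁ A₂ A₃ A₄ : X → X → E →L[ℝ] E)
    (hcontr : ∀ x y : X,
      A₁ x y (d x y) + A₂ x y (d x (T x)) + A₃ x y (d y (T y)) +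
        A₄ x y (d x (T y)) + A₄ x y (d y (T x)) - d (T x) (T y) ∈ P)
    (α : ℝ) (hα0 : 0 ≤ α) (hαk : α < 1 / k)
    (hA : ∀ x y : X, ‖A₁ x y‖ + ‖A₂ x y‖ + ‖A₃ x y‖ + 2 * ‖A₄ x y‖ ≤ α)
    (u v : X) (hu : T u = u) (hv : T v = v) :
    d u v = 0 ∧ u = v := by
  have key := hcontr u v
  rw [hu, hv] at key
  have h0u : d u u = 0 := (hd.eq_zero_iff u u).2 rfl
  have h0v : d v v = 0 := (hd.eq_zero_iff v v).2 rfl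
  have hsym : d v u = d u v := hd.symm v u
  rw [h0u, h0v, hsym, map_zero, map_zero] at key
  set w := d u v with hw
  have hwP : w ∈ P := hd.mem_cone u v
  -- key : A₁ u v w + 0 + 0 + A₄ u v w + A₄ u v w - w ∈ P
  have key' : (A₁ u v w + A₄ u v w + A₄ u v w) - w ∈ P := by
    convert key using 2
    abel
  have hle : ‖w‖ ≤ k * ‖A₁ u v w + A₄ u v w + A₄ u v w‖ :=
    hnorm w _ hwP key'
  have hbound : ‖A₁ u v w + A₄ u v w + A₄ u v w‖ ≤ α * ‖w‖ := by
    calc ‖A₁ u v w + A₄ u v w + A₄ u v w‖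
        ≤ ‖A₁ u v w‖ + ‖A₄ u v w‖ + ‖A₄ u v w‖ := by
          exact (norm_add_le _ _).trans (add_le_add_left (norm_add_le _ _) _)
      _ ≤ ‖A₁ u v‖ * ‖w‖ + ‖A₄ u v‖ * ‖w‖ + ‖A₄ u v‖ * ‖w‖ := by
          gcongr <;> exact ContinuousLinearMap.le_opNorm _ _
      _ = (‖A₁ u v‖ + 2 * ‖A₄ u v‖) * ‖w‖ := by ring
      _ ≤ α * ‖w‖ := by
          have := hA u v
          have h2 : ‖A₁ u v‖ + 2 * ‖A₄ u v‖ ≤ α := by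
            have h3 : (0:ℝ) ≤ ‖A₂ u v‖ := norm_nonneg _
            have h4 : (0:ℝ) ≤ ‖A₃ u v‖ := norm_nonneg _
            linarith
          exact mul_le_mul_of_nonneg_right h2 (norm_nonneg _)
  have hk0 : (0:ℝ) < k := lt_of_lt_of_le one_pos hk
  have hkα : k * α < 1 := by
    rw [lt_div_iff₀ hk0] at hαk
    linarith [mul_comm α k]
  have hwn : ‖w‖ ≤ k * α * ‖w‖ := by
    calc ‖w‖ ≤ k * ‖A₁ u v w + A₄ u v w + A₄ u v w‖ := hle
      _ ≤ k * (α * ‖w‖) := mul_le_mul_of_nonneg_left hbound (le_of_lt hk0)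
      _ = k * α * ‖w‖ := by ring
  have hwz : ‖w‖ = 0 := by
    by_contra h
    have hpos : 0 < ‖w‖ := lt_of_le_of_ne (norm_nonneg _) (Ne.symm h)
    nlinarith
  have : w = 0 := norm_eq_zero.1 hwz
  exact ⟨this, (hd.eq_zero_iff u v).1 this⟩
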